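/- Let k be a countable field and R = k[x,y]. There exists a sequence (f_n)_{n ≥ 1} of elements of R such that: (a) for every nonzero ideal 𝔞 of R, all but finitely many f_n lie in 𝔞 (so the partial sums of Σ f_n form a Cauchy, hence convergent, sequence in the 𝔞-adic sense, compatibly for all 𝔞); and (b) the resulting element of lim_{𝔞 ≠ 0} R/𝔞 determined by the partial sums is not in the image of R. -/

import Mathlib

/-- A family of elements of the quotients `R ⧸ 𝔞`, indexed by the nonzero ideals `𝔞`
of `R`, is compatible if it commutes with the natural quotient (transition) maps.
Such families are exactly the elements of the inverse limit `lim_{𝔞 ≠ 0} R ⧸ 𝔞`. -/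
def IsCompatibleFamily {R : Type*} [CommRing R]
    (x : ∀ a : {a : Ideal R // a ≠ ⊥}, R ⧸ a.1) : Prop :=
  ∀ (a b : {a : Ideal R // a ≠ ⊥}) (h : a.1 ≤ b.1),
    Ideal.Quotient.factor h (x a) = x b

section Aux

open MvPolynomial Finset

variable {k : Type*} [Field k]

/-- `QQ g n = X₀ ^ n * g 0 * ⋯ * g n`. -/
noncomputable def QQ (g : ℕ → MvPolynomial (Fin 2) k) (n : ℕ) : MvPolynomial (Fin 2) k :=
  X 0 ^ n * ∏ i ∈ Finset.range (n + 1), g i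

open scoped Classical in
/-- The recursively defined partial sums. -/
noncomputable def SS (g r : ℕ → MvPolynomial (Fin 2) k) : ℕ → MvPolynomial (Fin 2) k
  | 0 => 0
  | n + 1 => SS g r n +
      (if QQ g n * X 0 ∣ SS g r n - r n then 1 else 0) * QQ g n

lemma QQ_ne_zero {g : ℕ → MvPolynomial (Fin 2) k} (hg : ∀ i, g i ≠ 0) (n : ℕ) :
    QQ g n ≠ 0 :=
  mul_ne_zero (pow_ne_zero _ (X_ne_zero _)) (Finset.prod_ne_zero_iff.mpr fun i _ => hg i)

lemma X0_not_dvd_one : ¬ ((X 0 : MvPolynomial (Fin 2) k) ∣ 1) := by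
  rintro ⟨t, ht⟩
  have := congrArg (MvPolynomial.eval (fun _ => (0 : k))) ht
  simp at this

lemma SS_key {g r : ℕ → MvPolynomial (Fin 2) k} (hg : ∀ i, g i ≠ 0) (n : ℕ) :
    ¬ (QQ g n * X 0 ∣ SS g r (n + 1) - r n) := by
  classical
  show ¬ (QQ g n * X 0 ∣ SS g r n +
      (if QQ g n * X 0 ∣ SS g r n - r n then 1 else 0) * QQ g n - r n)
  by_cases h : QQ g n * X 0 ∣ SS g r n - r n
  · rw [if_pos h]
    intro hd
    have h2 : QQ g n * X 0 ∣ QQ g n * 1 := by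
      have := dvd_sub hd h
      have h3 : SS g r n + 1 * QQ g n - r n - (SS g r n - r n) = QQ g n * 1 := by ring
      rwa [h3] at this
    exact X0_not_dvd_one ((mul_dvd_mul_iff_left (QQ_ne_zero hg n)).mp h2)
  · rw [if_neg h]
    intro hd
    apply h
    have h3 : SS g r n + 0 * QQ g n - r n = SS g r n - r n := by ring
    rwa [h3] at hd

lemma QQ_dvd_QQ {g : ℕ → MvPolynomial (Fin 2) k} {n m : ℕ} (h : n < m) :
    QQ g n * X 0 ∣ QQ g m := by
  have h1 : QQ g n * X 0 = X 0 ^ (n + 1) * ∏ i ∈ Finset.range (n + 1), g i := by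
    rw [QQ]; ring
  rw [h1, QQ]
  exact mul_dvd_mul (pow_dvd_pow _ h)
    (Finset.prod_dvd_prod_of_subset _ _ _ (Finset.range_subset_range.mpr (by omega)))

lemma g_dvd_QQ {g : ℕ → MvPolynomial (Fin 2) k} {j m : ℕ} (h : j ≤ m) :
    g j ∣ QQ g m := by
  rw [QQ]
  exact Dvd.dvd.mul_left
    (Finset.dvd_prod_of_mem _ (Finset.mem_range.mpr (by omega))) _

lemma QQ_dvd_f {g r : ℕ → MvPolynomial (Fin 2) k} {n m : ℕ} (h : n < m) :
    QQ g n * X 0 ∣ SS g r (m + 1) - SS g r m := by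
  classical
  have : SS g r (m + 1) - SS g r m =
      (if QQ g m * X 0 ∣ SS g r m - r m then 1 else 0) * QQ g m := by
    show SS g r m + _ - SS g r m = _; ring
  rw [this]
  exact Dvd.dvd.mul_left (QQ_dvd_QQ h) _

lemma g_dvd_f {g r : ℕ → MvPolynomial (Fin 2) k} {j m : ℕ} (h : j ≤ m) :
    g j ∣ SS g r (m + 1) - SS g r m := by
  classical
  have : SS g r (m + 1) - SS g r m =
      (if QQ g m * X 0 ∣ SS g r m - r m then 1 else 0) * QQ g m := by
    show SS g r m + _ - SS g r m = _; ring
  rw [this]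
  exact Dvd.dvd.mul_left (g_dvd_QQ h) _

end Aux

set_option maxHeartbeats 1000000 in
/-- For `R = k[x,y]` with `k` a countable field, there is a sequence `(f n)` in `R`
such that (a) for every nonzero ideal `𝔞` all but finitely many `f n` lie in `𝔞`,
so the partial sums of `Σ f n` are eventually constant modulo each nonzero ideal
and determine a compatible family `x ∈ lim_{𝔞 ≠ 0} R ⧸ 𝔞`; and (b) `x` is not in
the image of the canonical map `R → lim_{𝔞 ≠ 0} R ⧸ 𝔞`. -/
theorem exists_convergent_series_not_in_image
    (k : Type*) [Field k] [Countable k] :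
    ∃ f : ℕ → MvPolynomial (Fin 2) k,
      (∀ a : Ideal (MvPolynomial (Fin 2) k), a ≠ ⊥ →
        ∀ᶠ n in Filter.atTop, f n ∈ a) ∧
      ∃ x : ∀ a : {a : Ideal (MvPolynomial (Fin 2) k) // a ≠ ⊥},
          MvPolynomial (Fin 2) k ⧸ a.1,
        IsCompatibleFamily x ∧
        (∀ a : {a : Ideal (MvPolynomial (Fin 2) k) // a ≠ ⊥},
          ∀ᶠ N in Filter.atTop,
            Ideal.Quotient.mk a.1 (∑ n ∈ Finset.range N, f n) = x a) ∧
        ∀ r : MvPolynomial (Fin 2) k, ∃ a, Ideal.Quotient.mk a.1 r ≠ x a := by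
  classical
  set R := MvPolynomial (Fin 2) k with hR
  haveI : Countable R := by rw [hR]; unfold MvPolynomial; exact Function.Injective.countable AddMonoidAlgebra.coeff_injective
  haveI : Nonempty {p : R // p ≠ 0} := ⟨⟨1, one_ne_zero⟩⟩
  obtain ⟨ge, hge⟩ := exists_surjective_nat {p : R // p ≠ 0}
  obtain ⟨re, hre⟩ := exists_surjective_nat R
  set g : ℕ → R := fun n => (ge n).1 with hgdef
  have hg : ∀ i, g i ≠ 0 := fun i => (ge i).2
  set f : ℕ → R := fun n => SS g re (n + 1) - SS g re n with hfdef
  -- partial sums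
  have hsum : ∀ N, ∑ n ∈ Finset.range N, f n = SS g re N := by
    intro N
    rw [hfdef, Finset.sum_range_sub (fun n => SS g re n) N]
    show SS g re N - SS g re 0 = SS g re N
    show SS g re N - 0 = SS g re N
    ring
  -- (a): for every nonzero ideal, eventually f n ∈ a
  have ha : ∀ a : Ideal R, a ≠ ⊥ → ∀ᶠ n in Filter.atTop, f n ∈ a := by
    intro a hane
    obtain ⟨z, hz, hz0⟩ := (Submodule.ne_bot_iff a).mp hane
    obtain ⟨j, hj⟩ := hge ⟨z, hz0⟩
    rw [Filter.eventually_atTop]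
    refine ⟨j, fun m hm => ?_⟩
    obtain ⟨t, ht⟩ := g_dvd_f (g := g) (r := re) hm
    rw [hfdef]
    show SS g re (m + 1) - SS g re m ∈ a
    rw [ht]
    apply Ideal.mul_mem_right
    have : g j = z := by rw [hgdef]; exact congrArg Subtype.val hj
    rwa [this]
  -- choose, for each nonzero ideal, a threshold
  have hA : ∀ a : {a : Ideal R // a ≠ ⊥}, ∃ n1 : ℕ, ∀ m ≥ n1, f m ∈ a.1 := fun a =>
    Filter.eventually_atTop.mp (ha a.1 a.2)
  set n0 : {a : Ideal R // a ≠ ⊥} → ℕ := fun a => (hA a).choose with hn0def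
  have hn0 : ∀ a, ∀ m ≥ n0 a, f m ∈ a.1 := fun a => (hA a).choose_spec
  -- stability of partial sums modulo an ideal
  have stab : ∀ (I : Ideal R) (n1 : ℕ), (∀ m ≥ n1, f m ∈ I) → ∀ N ≥ n1,
      Ideal.Quotient.mk I (SS g re N) = Ideal.Quotient.mk I (SS g re n1) := by
    intro I n1 h N hN
    rw [Ideal.Quotient.eq]
    have hdiff : SS g re N - SS g re n1 = ∑ m ∈ Finset.Ico n1 N, f m := by
      rw [Finset.sum_Ico_eq_sub _ hN, hsum, hsum]
    rw [hdiff]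
    exact Ideal.sum_mem I fun m hm => h m (Finset.mem_Ico.mp hm).1
  set x : ∀ a : {a : Ideal R // a ≠ ⊥}, R ⧸ a.1 :=
    fun a => Ideal.Quotient.mk a.1 (SS g re (n0 a)) with hxdef
  have hxN : ∀ a : {a : Ideal R // a ≠ ⊥}, ∀ N ≥ n0 a,
      Ideal.Quotient.mk a.1 (SS g re N) = x a := fun a N hN =>
    stab a.1 (n0 a) (hn0 a) N hN
  refine ⟨f, ha, x, ?_, ?_, ?_⟩
  · -- compatibility
    intro a b hab
    rw [hxdef]
    show Ideal.Quotient.factor hab (Ideal.Quotient.mk a.1 (SS g re (n0 a))) = _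
    rw [Ideal.Quotient.factor_mk]
    set N := max (n0 a) (n0 b) with hNdef
    have h1 : Ideal.Quotient.mk b.1 (SS g re N) = Ideal.Quotient.mk b.1 (SS g re (n0 a)) :=
      stab b.1 (n0 a) (fun m hm => hab (hn0 a m hm)) N (le_max_left _ _)
    have h2 : Ideal.Quotient.mk b.1 (SS g re N) = Ideal.Quotient.mk b.1 (SS g re (n0 b)) :=
      stab b.1 (n0 b) (hn0 b) N (le_max_right _ _)
    rw [← h1, h2]
  · -- eventual equality of partial sums with x
    intro a
    rw [Filter.eventually_atTop]
    exact ⟨n0 a, fun N hN => by rw [hsum]; exact hxN a N hN⟩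
  · -- not in the image of R
    intro r
    obtain ⟨n, rfl⟩ := hre r
    have hQne : QQ g n * MvPolynomial.X 0 ≠ 0 :=
      mul_ne_zero (QQ_ne_zero hg n) (MvPolynomial.X_ne_zero _)
    have habot : Ideal.span {QQ g n * MvPolynomial.X 0} ≠ (⊥ : Ideal R) := by
      rw [Ne, Ideal.span_singleton_eq_bot]; exact hQne
    set a : {a : Ideal R // a ≠ ⊥} := ⟨Ideal.span {QQ g n * MvPolynomial.X 0}, habot⟩
    refine ⟨a, fun hcon => ?_⟩
    -- f m ∈ a for m ≥ n+1
    have hmem : ∀ m ≥ n + 1, f m ∈ a.1 := by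
      intro m hm
      exact Ideal.mem_span_singleton.mpr (QQ_dvd_f (by omega))
    set N := max (n + 1) (n0 a) with hNdef
    have h1 : Ideal.Quotient.mk a.1 (SS g re N) = Ideal.Quotient.mk a.1 (SS g re (n + 1)) :=
      stab a.1 (n + 1) hmem N (le_max_left _ _)
    have h2 : Ideal.Quotient.mk a.1 (SS g re N) = x a := hxN a N (le_max_right _ _)
    have h3 : Ideal.Quotient.mk a.1 (SS g re (n + 1)) = Ideal.Quotient.mk a.1 (re n) := by
      rw [← h1, h2, ← hcon]
    rw [Ideal.Quotient.eq] at h3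
    exact SS_key hg n (Ideal.mem_span_singleton.mp h3)
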